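/- arXiv:2406.01019 — 2 statements merged into one kernel-verified Lean document; each statement's English description precedes it below -/
import Mathlib

section
/- Let $k$ be an algebraically closed field of characteristic zero, let $s, t \geq 1$ and $u \geq 0$ be integers, and let $c_1, c_2 \in k \setminus \{0\}$. Then the $k$-derivation $\bar{d} = \partial_x + x^u(c_1 x^t y^s + c_2)\partial_y$ of $k[x,y]$ is simple if and only if the $k$-derivation $d = \partial_x + x^u(x^t y^s + 1)\partial_y$ of $k[x,y]$ is simple. -/
open MvPolynomial

/-- A `k`-derivation `d` of `k[x,y]` is *simple* if the only `d`-differential ideals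
(ideals `I` with `d(I) ⊆ I`) are `(0)` and the whole ring. Here `k[x,y]` is modelled as
`MvPolynomial (Fin 2) k`, with `x = X 0` and `y = X 1`. -/
def IsSimpleDerivation {k : Type*} [CommRing k]
    (d : Derivation k (MvPolynomial (Fin 2) k) (MvPolynomial (Fin 2) k)) : Prop :=
  ∀ I : Ideal (MvPolynomial (Fin 2) k), (∀ f ∈ I, d f ∈ I) → I = ⊥ ∨ I = ⊤

section Aux

abbrev MvP (k : Type*) [CommRing k] := MvPolynomial (Fin 2) k

variable {k : Type*} [CommRing k]

/-- Conjugation of a derivation by an algebra automorphism. -/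
noncomputable def conjDer (e : MvP k ≃ₐ[k] MvP k) (d : Derivation k (MvP k) (MvP k)) :
    Derivation k (MvP k) (MvP k) where
  toLinearMap := e.symm.toLinearMap ∘ₗ d.toLinearMap ∘ₗ e.toLinearMap
  map_one_eq_zero' := by simp
  leibniz' a b := by
    simp [Derivation.leibniz, map_add, map_mul, smul_eq_mul]

lemma conjDer_apply (e : MvP k ≃ₐ[k] MvP k) (d : Derivation k (MvP k) (MvP k)) (f : MvP k) :
    conjDer e d f = e.symm (d (e f)) := rfl

lemma isSimple_of_conj (d d' : Derivation k (MvP k) (MvP k))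
    (e : MvP k ≃ₐ[k] MvP k) (c : k) (hc : IsUnit c)
    (h : ∀ f, d' f = c • e.symm (d (e f))) :
    IsSimpleDerivation d → IsSimpleDerivation d' := by
  intro hd I hI
  set J : Ideal (MvP k) := I.comap (e.symm : MvP k →+* MvP k) with hJ
  have memJ : ∀ g, g ∈ J ↔ e.symm g ∈ I := fun g => Iff.rfl
  have hJstab : ∀ g ∈ J, d g ∈ J := by
    intro g hg
    rw [memJ]
    obtain ⟨cinv, hcinv⟩ := hc.exists_left_inv
    have := h (e.symm g)
    rw [e.apply_symm_apply] at this
    have h2 : e.symm (d g) = cinv • d' (e.symm g) := by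
      rw [this, smul_smul, hcinv, one_smul]
    rw [h2]
    exact Submodule.smul_of_tower_mem I cinv (hI _ hg)
  rcases hd J hJstab with hb | ht
  · left
    ext f
    simp only [Ideal.mem_bot]
    constructor
    · intro hf
      have : e f ∈ J := by rw [memJ, e.symm_apply_apply]; exact hf
      rw [hb, Ideal.mem_bot] at this
      have := congrArg e.symm this
      simpa using this
    · rintro rfl; exact I.zero_mem
  · right
    rw [Ideal.eq_top_iff_one]
    have : (1 : MvP k) ∈ J := ht ▸ Submodule.mem_top
    simpa using (memJ 1).mp this

variable {K : Type*} [Field K]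

noncomputable def scaleHom (a b : K) : MvP K →ₐ[K] MvP K :=
  aeval ![C a * X 0, C b * X 1]

lemma scaleHom_comp (a b a' b' : K) :
    (scaleHom a b).comp (scaleHom a' b') = scaleHom (a * a') (b * b') := by
  apply MvPolynomial.algHom_ext
  intro i
  fin_cases i <;>
    simp [scaleHom, mul_comm, mul_assoc, mul_left_comm, map_mul, algebraMap_eq]

noncomputable def scaleEquiv (a b : K) (ha : a ≠ 0) (hb : b ≠ 0) : MvP K ≃ₐ[K] MvP K :=
  AlgEquiv.ofAlgHom (scaleHom a b) (scaleHom a⁻¹ b⁻¹)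
    (by rw [scaleHom_comp, mul_inv_cancel₀ ha, mul_inv_cancel₀ hb]
        apply MvPolynomial.algHom_ext; intro i; fin_cases i <;> simp [scaleHom])
    (by rw [scaleHom_comp, inv_mul_cancel₀ ha, inv_mul_cancel₀ hb]
        apply MvPolynomial.algHom_ext; intro i; fin_cases i <;> simp [scaleHom])

lemma scaleEquiv_apply (a b : K) (ha : a ≠ 0) (hb : b ≠ 0) (f : MvP K) :
    scaleEquiv a b ha hb f = scaleHom a b f := rfl

lemma scaleEquiv_symm_apply (a b : K) (ha : a ≠ 0) (hb : b ≠ 0) (f : MvP K) :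
    (scaleEquiv a b ha hb).symm f = scaleHom a⁻¹ b⁻¹ f := rfl

lemma key_derivation_eq (a b c₁ c₂ : K) (ha : a ≠ 0) (hb : b ≠ 0) (u t s : ℕ)
    (h2 : a⁻¹ * b * (a⁻¹)^u = c₂)
    (h3 : c₂ * ((a⁻¹)^t * (b⁻¹)^s) = c₁) :
    mkDerivation K ![1, X 0 ^ u * (C c₁ * X 0 ^ t * X 1 ^ s + C c₂)] =
      a⁻¹ • conjDer (scaleEquiv a b ha hb)
        (mkDerivation K ![1, X 0 ^ u * (X 0 ^ t * X 1 ^ s + 1)]) := by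
  apply derivation_ext
  intro i
  fin_cases i
  · show _ = a⁻¹ • (scaleEquiv a b ha hb).symm
      ((mkDerivation K ![1, X 0 ^ u * (X 0 ^ t * X 1 ^ s + 1)]) (scaleEquiv a b ha hb (X 0)))
    rw [mkDerivation_X, scaleEquiv_apply]
    simp only [scaleHom, aeval_X, Matrix.cons_val_zero]
    conv_rhs => rw [← smul_eq_C_mul, Derivation.map_smul, mkDerivation_X]
    simp only [Matrix.cons_val_zero, smul_eq_C_mul, mul_one, map_smul, smul_smul,
      inv_mul_cancel₀ ha, one_smul]
    simp [scaleEquiv_symm_apply, scaleHom, ← C_mul, inv_mul_cancel₀ ha]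
  · show _ = a⁻¹ • (scaleEquiv a b ha hb).symm
      ((mkDerivation K ![1, X 0 ^ u * (X 0 ^ t * X 1 ^ s + 1)]) (scaleEquiv a b ha hb (X 1)))
    rw [mkDerivation_X, scaleEquiv_apply]
    simp only [scaleHom, aeval_X, Matrix.cons_val_one, Matrix.head_cons, Matrix.cons_val_zero]
    conv_rhs => rw [← smul_eq_C_mul, Derivation.map_smul, mkDerivation_X]
    rw [map_smul, smul_smul]
    rw [scaleEquiv_symm_apply]
    simp only [Matrix.cons_val_one, Matrix.head_cons, map_mul, map_add, map_pow, map_one,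
      scaleHom, aeval_X, Matrix.cons_val_zero]
    rw [← h3, ← h2]
    rw [smul_eq_C_mul]
    simp only [map_mul, map_pow]
    show X 0 ^ u * (C a⁻¹ * C b * C a⁻¹ ^ u * (C a⁻¹ ^ t * C b⁻¹ ^ s) * X 0 ^ t * X 1 ^ s +
      C a⁻¹ * C b * C a⁻¹ ^ u) = _
    ring

end Aux

theorem simple_derivation_normalization_xtys
    (k : Type*) [Field k] [CharZero k] [IsAlgClosed k]
    (s t u : ℕ) (hs : 1 ≤ s) (ht : 1 ≤ t)
    (c₁ c₂ : k) (hc₁ : c₁ ≠ 0) (hc₂ : c₂ ≠ 0) :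
    IsSimpleDerivation
      (MvPolynomial.mkDerivation k
        ![1, X 0 ^ u * (C c₁ * X 0 ^ t * X 1 ^ s + C c₂)]) ↔
    IsSimpleDerivation
      (MvPolynomial.mkDerivation k
        ![1, X 0 ^ u * (X 0 ^ t * X 1 ^ s + 1)]) := by
  have h0 : c₁ * c₂ ^ (s - 1) ≠ 0 := mul_ne_zero hc₁ (pow_ne_zero _ hc₂)
  have hNpos : 0 < t + s * (u + 1) :=
    Nat.lt_of_lt_of_le Nat.zero_lt_one (le_trans ht (Nat.le_add_right t _))
  obtain ⟨a, haN⟩ := IsAlgClosed.exists_pow_nat_eq ((c₁ * c₂ ^ (s - 1))⁻¹ : k) hNpos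
  have ha : a ≠ 0 := by
    intro h
    rw [h, zero_pow hNpos.ne'] at haN
    exact inv_ne_zero h0 haN.symm
  obtain ⟨b, hbdef⟩ : ∃ b : k, b = c₂ * a ^ (u + 1) := ⟨_, rfl⟩
  have hb : b ≠ 0 := hbdef ▸ mul_ne_zero hc₂ (pow_ne_zero _ ha)
  have hss : c₂ ^ s = c₂ ^ (s - 1) * c₂ := by
    rw [← pow_succ, Nat.sub_add_cancel hs]
  have key : c₁ * a ^ t * b ^ s = c₂ := by
    calc c₁ * a ^ t * b ^ s
        = (c₁ * c₂ ^ (s - 1)) * a ^ (t + s * (u + 1)) * c₂ := by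
          rw [hbdef, mul_pow, ← pow_mul, pow_add, hss]; ring
      _ = c₂ := by rw [haN, mul_inv_cancel₀ h0, one_mul]
  have h2 : a⁻¹ * b * (a⁻¹) ^ u = c₂ := by
    rw [hbdef, inv_pow, pow_succ]
    field_simp
  have h3 : c₂ * ((a⁻¹) ^ t * (b⁻¹) ^ s) = c₁ := by
    rw [inv_pow, inv_pow]
    field_simp
    linear_combination -key
  have hEq := key_derivation_eq a b c₁ c₂ ha hb u t s h2 h3
  set e := scaleEquiv a b ha hb with he
  have happ : ∀ f : MvP k,
      (mkDerivation k ![1, X 0 ^ u * (C c₁ * X 0 ^ t * X 1 ^ s + C c₂)] :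
        Derivation k (MvP k) (MvP k)) f =
      a⁻¹ • e.symm ((mkDerivation k ![1, X 0 ^ u * (X 0 ^ t * X 1 ^ s + 1)] :
        Derivation k (MvP k) (MvP k)) (e f)) := by
    intro f
    rw [hEq]; rfl
  constructor
  · apply isSimple_of_conj _ _ e.symm a (Ne.isUnit ha)
    intro f
    have h1 := happ (e.symm f)
    rw [e.apply_symm_apply] at h1
    rw [AlgEquiv.symm_symm, h1, map_smul, e.apply_symm_apply, smul_smul,
      mul_inv_cancel₀ ha, one_smul]
  · exact isSimple_of_conj _ _ e a⁻¹ (Ne.isUnit (inv_ne_zero ha)) happ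
end

section
/- Let $k$ be a field of characteristic zero, let $r, t, s_1, s_2 \geq 0$ be integers with $s_1 \neq s_2$, and let $c_1, c_2 \in k$. Then the $k$-derivation $d = y^r\partial_x + x^t(c_1 y^{s_1} + c_2 y^{s_2})\partial_y$ of $k[x,y]$ is not simple. -/
open MvPolynomial

-- auxiliary: if d P = Q * P then span {P} is differential
lemma span_diff {k : Type*} [Field k]
    (d : Derivation k (MvPolynomial (Fin 2) k) (MvPolynomial (Fin 2) k))
    (P Q : MvPolynomial (Fin 2) k) (h : d P = Q * P) :
    ∀ f ∈ Ideal.span {P}, d f ∈ Ideal.span {P} := by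
  intro f hf
  rw [Ideal.mem_span_singleton] at hf ⊢
  obtain ⟨g, rfl⟩ := hf
  rw [Derivation.leibniz, h, smul_eq_mul, smul_eq_mul]
  exact dvd_add (dvd_mul_right P _) ⟨g * Q, by ring⟩

theorem not_simple_derivation_equal_x_powers
    (k : Type*) [Field k] [CharZero k]
    (r t s₁ s₂ : ℕ) (hs : s₁ ≠ s₂) (c₁ c₂ : k) :
    ¬ IsSimpleDerivation
      (MvPolynomial.mkDerivation k
        ![X 1 ^ r, X 0 ^ t * (C c₁ * X 1 ^ s₁ + C c₂ * X 1 ^ s₂)]) := by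
  intro hsimp
  set F : MvPolynomial (Fin 2) k := C c₁ * X 1 ^ s₁ + C c₂ * X 1 ^ s₂ with hF
  set d := MvPolynomial.mkDerivation k ![X 1 ^ r, X 0 ^ t * F] with hd
  have hdX0 : d (X 0) = X 1 ^ r := by
    rw [hd, mkDerivation_X]; rfl
  have hdX1 : d (X 1) = X 0 ^ t * F := by
    rw [hd, mkDerivation_X]; rfl
  -- evaluation hom to k[Y]
  set φ : MvPolynomial (Fin 2) k →ₐ[k] Polynomial k := MvPolynomial.aeval ![0, Polynomial.X] with hφ
  have hφ0 : φ (X 0) = 0 := by rw [hφ, aeval_X]; rfl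
  have hφ1 : φ (X 1) = Polynomial.X := by rw [hφ, aeval_X]; rfl
  by_cases hA : (c₁ ≠ 0 ∧ 0 < s₁) ∨ (c₂ ≠ 0 ∧ 0 < s₂)
  · -- F is nonconstant, (F) is a differential ideal
    have hdF : d F = ((s₁ : MvPolynomial (Fin 2) k) * C c₁ * X 1 ^ (s₁ - 1) +
        (s₂ : MvPolynomial (Fin 2) k) * C c₂ * X 1 ^ (s₂ - 1)) * (X 0 ^ t) * F := by
      rw [hF]
      rw [map_add, Derivation.leibniz, Derivation.leibniz, derivation_C, derivation_C,
        Derivation.leibniz_pow, Derivation.leibniz_pow, hdX1]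
      simp only [smul_eq_mul, nsmul_eq_mul]
      ring
    have := hsimp (Ideal.span {F}) (span_diff d F _ (by rw [hdF]))
    have hφF : φ F = Polynomial.C c₁ * Polynomial.X ^ s₁ + Polynomial.C c₂ * Polynomial.X ^ s₂ := by
      rw [hF]; simp [hφ1]
    have hcoeff : ∀ n : ℕ, (φ F).coeff n =
        (if n = s₁ then c₁ else 0) + (if n = s₂ then c₂ else 0) := by
      intro n
      rw [hφF]
      simp [Polynomial.coeff_C_mul, Polynomial.coeff_X_pow, eq_comm]
    rcases this with hbot | htop
    · rw [Ideal.span_singleton_eq_bot] at hbot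
      have hz : ∀ n, (φ F).coeff n = 0 := by rw [hbot]; simp
      rcases hA with ⟨hc, hspos⟩ | ⟨hc, hspos⟩
      · have h1 := (hcoeff s₁).symm.trans (hz s₁)
        simp [if_neg hs] at h1
        exact hc h1
      · have h1 := (hcoeff s₂).symm.trans (hz s₂)
        simp [if_neg (Ne.symm hs)] at h1
        exact hc h1
    · rw [Ideal.span_singleton_eq_top] at htop
      have := htop.map φ
      rw [Polynomial.isUnit_iff] at this
      obtain ⟨a, -, ha⟩ := this
      rcases hA with ⟨hc, hspos⟩ | ⟨hc, hspos⟩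
      · have h1 := hcoeff s₁
        rw [← ha] at h1
        rw [Polynomial.coeff_C, if_neg (by omega)] at h1
        simp [if_neg hs] at h1
        exact hc h1.symm
      · have h1 := hcoeff s₂
        rw [← ha] at h1
        rw [Polynomial.coeff_C, if_neg (by omega)] at h1
        simp [if_neg (Ne.symm hs)] at h1
        exact hc h1.symm
  · -- F is constant
    push_neg at hA
    obtain ⟨c, hFc⟩ : ∃ c : k, F = C c := by
      have h1 : c₁ = 0 ∨ s₁ = 0 := by
        rcases eq_or_ne c₁ 0 with h | h
        · exact Or.inl h
        · exact Or.inr (Nat.le_zero.mp (hA.1 h))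
      have h2 : c₂ = 0 ∨ s₂ = 0 := by
        rcases eq_or_ne c₂ 0 with h | h
        · exact Or.inl h
        · exact Or.inr (Nat.le_zero.mp (hA.2 h))
      rcases h1 with h1 | h1 <;> rcases h2 with h2 | h2
      · exact ⟨0, by simp [hF, h1, h2]⟩
      · exact ⟨c₂, by simp [hF, h1, h2]⟩
      · exact ⟨c₁, by simp [hF, h1, h2]⟩
      · exact absurd (h1.trans h2.symm) hs
    set H : MvPolynomial (Fin 2) k :=
      C (c * (r + 1)) * X 0 ^ (t + 1) - C (((t : k) + 1)) * X 1 ^ (r + 1) with hH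
    have hdH : d H = 0 := by
      rw [hH, map_sub, Derivation.leibniz, Derivation.leibniz, derivation_C, derivation_C,
        Derivation.leibniz_pow, Derivation.leibniz_pow, hdX0, hdX1, hFc]
      simp only [smul_eq_mul, nsmul_eq_mul, map_mul, map_add, map_natCast, map_one]
      push_cast
      ring
    have := hsimp (Ideal.span {H}) (span_diff d H 0 (by rw [hdH, zero_mul]))
    have hφH : φ H = - Polynomial.C ((t : k) + 1) * Polynomial.X ^ (r + 1) := by
      rw [hH]
      have hφC : ∀ a : k, φ (C a) = Polynomial.C a := by
        intro a
        rw [hφ, aeval_C]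
        rfl
      simp only [map_sub, map_mul, map_pow, hφ0, hφ1, hφC, zero_pow (Nat.succ_ne_zero t)]
      ring
    have ht1 : ((t : k) + 1) ≠ 0 := by
      exact_mod_cast (Nat.cast_add_one_ne_zero t : ((t : k) + 1) ≠ 0)
    rcases this with hbot | htop
    · rw [Ideal.span_singleton_eq_bot] at hbot
      have h0 : φ H = 0 := by rw [hbot, map_zero]
      rw [hφH] at h0
      simp only [neg_mul, neg_eq_zero, mul_eq_zero] at h0
      rcases h0 with h0 | h0
      · rw [Polynomial.C_eq_zero] at h0
        exact ht1 h0
      · exact pow_ne_zero _ Polynomial.X_ne_zero h0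
    · rw [Ideal.span_singleton_eq_top] at htop
      have hu := htop.map φ
      rw [hφH] at hu
      rw [neg_mul] at hu
      replace hu := hu.neg
      rw [neg_neg] at hu
      have hdeg := Polynomial.natDegree_eq_zero_of_isUnit hu
      rw [Polynomial.natDegree_C_mul ht1, Polynomial.natDegree_X_pow] at hdeg
      exact Nat.succ_ne_zero r hdeg
end
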